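/- arXiv:1609.04842 — 2 statements merged into one kernel-verified Lean document; each statement's English description precedes it below -/
import Mathlib

section
/- Let R be a commutative noetherian ring and X a finitely generated R-module with Ext^i_R(X,R) = 0 for all 0 ≤ i ≤ c, where c ≥ 0. Then for every n ≥ 1, every R-module homomorphism from the c-th syzygy Ω^c X to the (c+n)-th syzygy Ω^{c+n} Y of any finitely generated R-module Y factors through a projective R-module. -/
open CategoryTheory
universe u
noncomputable section

/-- A linear map factors through a projective module. -/
def FactorsThroughProjective {R : Type u} [Ring R] {M N : Type u}
    [AddCommGroup M] [AddCommGroup N] [Module R M] [Module R N] (f : M →ₗ[R] N) : Prop :=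
  ∃ (P : Type u) (_ : AddCommGroup P) (_ : Module R P), Module.Projective R P ∧
    ∃ (g : M →ₗ[R] P) (h : P →ₗ[R] N), h.comp g = f

/-- `Ext^i_R(X, Y) = 0`. -/
def extZero (R : Type u) [CommRing R] (i : ℕ) (X Y : ModuleCat.{u} R) : Prop :=
  Subsingleton (((Ext R (ModuleCat.{u} R) i).obj (Opposite.op X)).obj Y)

/-- `Y` is an `n`-th syzygy of `N` (via finitely generated projective modules). -/
def IsSyzygy (R : Type u) [CommRing R] : ℕ → ModuleCat.{u} R → ModuleCat.{u} R → Prop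
  | 0, Y, N => Nonempty (Y ≅ N)
  | n+1, Y, N => ∃ (P K : ModuleCat.{u} R) (i : Y ⟶ P) (p : P ⟶ K),
      Projective P ∧ Module.Finite R P ∧ Function.Injective i ∧ Function.Surjective p ∧
      Function.Exact i p ∧ IsSyzygy R n K N

/-- projective dimension at most `n` -/
def pdLE (A : Type u) [Ring A] : ℕ → ModuleCat.{u} A → Prop
  | 0, M => Projective M
  | n+1, M => Projective M ∨ ∃ (K P : ModuleCat.{u} A) (i : K ⟶ P) (p : P ⟶ M),
      Projective P ∧ Function.Injective i ∧ Function.Surjective p ∧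
      Function.Exact i p ∧ pdLE A n K

/-- global dimension at most `n` -/
def gldimLE (A : Type u) [Ring A] (n : ℕ) : Prop := ∀ M : ModuleCat.{u} A, pdLE A n M

/-- `M` is `d`-torsionfree: it is a `d`-th syzygy of a finitely generated module `N`
with `Ext^i(N,R) = 0` for `1 ≤ i ≤ d`. -/
def IsTorsionFree (R : Type u) [CommRing R] (d : ℕ) (M : ModuleCat.{u} R) : Prop :=
  ∃ N : ModuleCat.{u} R, Module.Finite R N ∧
    (∀ i, 1 ≤ i → i ≤ d → extZero R i N (ModuleCat.of R R)) ∧ IsSyzygy R d M N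

/-- `N` lies in `add M`: it is a direct summand of a finite direct sum of copies of `M`. -/
def MemAdd (R : Type u) [CommRing R] (M N : ModuleCat.{u} R) : Prop :=
  ∃ (k : ℕ) (i : N →ₗ[R] (Fin k → M)) (p : (Fin k → M) →ₗ[R] N), p.comp i = LinearMap.id

namespace Stmt4Aux

variable {R : Type u} [CommRing R]

lemma subsingleton_of_isZero {M : ModuleCat.{u} R} (h : Limits.IsZero M) :
    Subsingleton M := by
  constructor
  intro a b
  have h1 : (𝟙 M : M ⟶ M) = 0 := h.eq_of_src _ _
  have : ∀ x : M, x = 0 := fun x => by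
    calc x = (𝟙 M : M ⟶ M) x := rfl
    _ = (0 : M ⟶ M) x := by rw [h1]
    _ = 0 := rfl
  rw [this a, this b]

/-- vanishing of Ext^j(X,Y) is equivalent to exactness of the Yoneda complex of any
projective resolution. -/
lemma extZero_iff_exactAt {X : ModuleCat.{u} R} (P : ProjectiveResolution X)
    (j : ℕ) (Y : ModuleCat.{u} R) :
    Subsingleton (((Ext R (ModuleCat.{u} R) j).obj (Opposite.op X)).obj Y) ↔
      (P.complex.linearYonedaObj R Y).ExactAt j := by
  rw [HomologicalComplex.exactAt_iff_isZero_homology]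
  constructor
  · intro h
    exact Limits.IsZero.of_iso (ModuleCat.isZero_of_subsingleton _) (P.isoExt j Y).symm
  · intro h
    exact subsingleton_of_isZero (Limits.IsZero.of_iso h (P.isoExt j Y))


variable {R : Type u} [CommRing R]

section AugRes

variable {K Q X : ModuleCat.{u} R} (i : K ⟶ Q) (p : Q ⟶ X)
  (hQ : Projective Q) (hi : Function.Injective i) (hp : Function.Surjective p)
  (hex : Function.Exact i p) (PK : ProjectiveResolution K)

/-- augmentation map of a projective resolution, with codomain `K`. -/
def aug0 : PK.complex.X 0 ⟶ K := PK.π.f 0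

lemma aug0_surj : Function.Surjective (aug0 PK) := by
  have : Epi (PK.π.f 0) := inferInstance
  exact (ModuleCat.epi_iff_surjective (aug0 PK)).1 this

lemma d_aug0 : PK.complex.d 1 0 ≫ aug0 PK = 0 := PK.complex_d_comp_π_f_zero

lemma aug0_exact : ∀ x : PK.complex.X 0, aug0 PK x = 0 →
    ∃ y : PK.complex.X 1, PK.complex.d 1 0 y = x := by
  have h := PK.exact₀
  rw [ShortComplex.moduleCat_exact_iff] at h
  exact h

lemma w_aug : PK.complex.d 1 0 ≫ (aug0 PK ≫ i) = 0 := by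
  rw [← Category.assoc, d_aug0, Limits.zero_comp]

/-- the complex of the augmented resolution -/
def augCx : ChainComplex (ModuleCat.{u} R) ℕ :=
  PK.complex.augment (aug0 PK ≫ i) (w_aug i PK)

include hex in
lemma hπw : (augCx i PK).d 1 0 ≫ p = 0 := by
  show (aug0 PK ≫ i) ≫ p = 0
  ext x
  show p (i (aug0 PK x)) = 0
  exact (hex (i (aug0 PK x))).2 ⟨_, rfl⟩


omit hQ in include hi in
lemma augCx_exactAt_succ (n : ℕ) : (augCx i PK).ExactAt (n + 1) := by
  rw [HomologicalComplex.exactAt_iff' _ (n+2) (n+1) n (by simp) (by simp)]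
  rw [ShortComplex.moduleCat_exact_iff]
  match n with
  | 0 =>
    intro x hx
    -- x : (augCx i PK).X 1 = PK.complex.X 0, hx : (aug0 ≫ i) x = 0
    have hx' : i (aug0 PK x) = 0 := hx
    have h0 : aug0 PK x = 0 := by
      apply hi
      rw [hx', map_zero]
    exact aug0_exact PK x h0
  | m+1 =>
    intro x hx
    have h := PK.complex_exactAt_succ m
    rw [HomologicalComplex.exactAt_iff' _ (m+2) (m+1) m (by simp) (by simp)] at h
    rw [ShortComplex.moduleCat_exact_iff] at h
    exact h x hx

/-- The resolution of `X` obtained by augmenting a resolution of `K` by `Q`. -/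
def augRes : ProjectiveResolution X where
  complex := augCx i PK
  projective n := by
    match n with
    | 0 => exact hQ
    | n+1 => exact PK.projective n
  π := (ChainComplex.toSingle₀Equiv _ _).symm ⟨p, hπw i p hex PK⟩
  quasiIso := ⟨fun n => by
    match n with
    | 0 =>
      rw [ChainComplex.quasiIsoAt₀_iff, ShortComplex.quasiIso_iff_of_zeros']
      · constructor
        · rw [ShortComplex.moduleCat_exact_iff]
          intro (x : Q) hx
          have hf0 : (((ChainComplex.toSingle₀Equiv (augCx i PK) X).symm
              ⟨p, hπw i p hex PK⟩).f 0) = p :=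
            ChainComplex.toSingle₀Equiv_symm_apply_f_zero (C := augCx i PK) (X := X) p (hπw i p hex PK)
          have hx' : (((ChainComplex.toSingle₀Equiv (augCx i PK) X).symm
              ⟨p, hπw i p hex PK⟩).f 0) x = 0 := hx
          rw [hf0] at hx'
          obtain ⟨k, hk⟩ := (hex x).1 hx'
          obtain ⟨y, hy⟩ := aug0_surj PK k
          refine ⟨y, ?_⟩
          show i (aug0 PK y) = x
          rw [hy, hk]
        · show Epi (((ChainComplex.toSingle₀Equiv (augCx i PK) X).symm
            ⟨p, hπw i p hex PK⟩).f 0)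
          rw [ChainComplex.toSingle₀Equiv_symm_apply_f_zero (C := augCx i PK) (X := X) p (hπw i p hex PK)]
          exact (ModuleCat.epi_iff_surjective p).2 hp
      · rfl
      · rfl
      · rfl
    | n+1 =>
      rw [quasiIsoAt_iff_exactAt' _ _ (ChainComplex.exactAt_succ_single_obj _ _)]
      exact augCx_exactAt_succ i hi PK n⟩

end AugRes



section ExtLemmas

variable (R) in
abbrev extV (j : ℕ) (X : ModuleCat.{u} R) : Prop :=
  Subsingleton (((Ext R (ModuleCat.{u} R) j).obj (Opposite.op X)).obj (ModuleCat.of R R))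

lemma extV_of_iso {j : ℕ} {K X : ModuleCat.{u} R} (e : K ≅ X) (h : extV R j X) :
    extV R j K := by
  have hZ : Limits.IsZero (((Ext R (ModuleCat.{u} R) j).obj (Opposite.op X)).obj
      (ModuleCat.of R R)) := @ModuleCat.isZero_of_subsingleton _ _ _ h
  exact subsingleton_of_isZero (hZ.of_iso
    (Iso.app ((Ext R (ModuleCat.{u} R) j).mapIso e.symm.op) (ModuleCat.of R R)))

/-- `Ext^0(X,R) = 0` implies `Hom(X,R) = 0`. -/
lemma hom_eq_zero_of_extV₀ {X : ModuleCat.{u} R} (h : extV R 0 X)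
    (ψ : X ⟶ ModuleCat.of R R) : ψ = 0 := by
  let P := ProjectiveResolution.of X
  have h := (extZero_iff_exactAt P 0 (ModuleCat.of R R)).mp h
  rw [HomologicalComplex.exactAt_iff' _ 0 0 1 (by simp) (by simp),
    ShortComplex.moduleCat_exact_iff] at h
  have hx : (P.complex.linearYonedaObj R (ModuleCat.of R R)).d 0 1
      ((P.π.f 0 : P.complex.X 0 ⟶ X) ≫ ψ) = 0 := by
    change P.complex.d 1 0 ≫ _ = 0
    have e0 := P.complex_d_comp_π_f_zero
    exact (Category.assoc _ _ _).symm.trans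
      ((congrArg (fun t => t ≫ ψ) e0).trans Limits.zero_comp)
  obtain ⟨y, hy⟩ := h _ hx
  have hd00 : (P.complex.linearYonedaObj R (ModuleCat.of R R)).d 0 0 = 0 :=
    HomologicalComplex.shape _ 0 0 (by simp)
  have hy' : (P.π.f 0 : P.complex.X 0 ⟶ X) ≫ ψ = 0 := by
    rw [← hy]
    show (P.complex.linearYonedaObj R (ModuleCat.of R R)).d 0 0 y = 0
    rw [hd00]
    rfl
  have hsurj : Function.Surjective (P.π.f 0 : P.complex.X 0 ⟶ X) := by
    have : Epi (P.π.f 0) := inferInstance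
    exact (ModuleCat.epi_iff_surjective ((P.π.f 0 : P.complex.X 0 ⟶ X))).1 this
  ext x
  obtain ⟨y0, hy0⟩ := hsurj x
  have h2 : ψ ((P.π.f 0 : P.complex.X 0 ⟶ X) y0) = 0 :=
    (congrArg (fun t => (t : P.complex.X 0 ⟶ ModuleCat.of R R) y0) hy').trans rfl
  rw [hy0] at h2
  simpa using h2

variable {K Q X : ModuleCat.{u} R} (i : K ⟶ Q) (p : Q ⟶ X)
  (hQ : Projective Q) (hi : Function.Injective i) (hp : Function.Surjective p)
  (hex : Function.Exact i p)

include hQ hi hp hex in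
/-- `Ext^1(X,R) = 0` implies maps `K → R` extend along `K ↪ Q`. -/
lemma extend_of_extV₁ (h1 : extV R 1 X) (ψ : K ⟶ ModuleCat.of R R) :
    ∃ φ : Q ⟶ ModuleCat.of R R, i ≫ φ = ψ := by
  let PK := ProjectiveResolution.of K
  have h1 := (extZero_iff_exactAt (augRes i p hQ hi hp hex PK) 1 (ModuleCat.of R R)).mp h1
  rw [HomologicalComplex.exactAt_iff' _ 0 1 2 (by simp) (by simp),
    ShortComplex.moduleCat_exact_iff] at h1
  have hx : ((augCx i PK).linearYonedaObj R (ModuleCat.of R R)).d 1 2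
      (aug0 PK ≫ ψ) = 0 := by
    show (augCx i PK).d 2 1 ≫ aug0 PK ≫ ψ = 0
    show PK.complex.d 1 0 ≫ aug0 PK ≫ ψ = 0
    rw [← Category.assoc, d_aug0, Limits.zero_comp]
  obtain ⟨φ, hφ⟩ := h1 (aug0 PK ≫ ψ) hx
  let φ' : Q ⟶ ModuleCat.of R R := φ
  have hφ' : (aug0 PK ≫ i) ≫ φ' = aug0 PK ≫ ψ := hφ
  refine ⟨φ', ?_⟩
  ext k
  obtain ⟨y, hy⟩ := aug0_surj PK k
  have h2 : φ' (i (aug0 PK y)) = ψ (aug0 PK y) :=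
    congrArg (fun t => (t : PK.complex.X 0 ⟶ ModuleCat.of R R) y) hφ'
  rw [hy] at h2
  exact h2

include hQ hi hp hex in
/-- dimension shifting: `Ext^(j+2)(X,R) = 0` implies `Ext^(j+1)(K,R) = 0`. -/
lemma extV_shift (j : ℕ) (h : extV R (j+2) X) : extV R (j+1) K := by
  let PK := ProjectiveResolution.of K
  have h := (extZero_iff_exactAt (augRes i p hQ hi hp hex PK) (j+2) (ModuleCat.of R R)).mp h
  refine (extZero_iff_exactAt PK (j+1) (ModuleCat.of R R)).mpr ?_
  rw [HomologicalComplex.exactAt_iff' _ (j+1) (j+2) (j+3) (by simp) (by simp),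
    ShortComplex.moduleCat_exact_iff] at h
  rw [HomologicalComplex.exactAt_iff' _ j (j+1) (j+2) (by simp) (by simp),
    ShortComplex.moduleCat_exact_iff]
  intro x hx
  exact h x hx

end ExtLemmas


lemma module_projective_of_projective (P : ModuleCat.{u} R) (hP : Projective P) :
    Module.Projective R P :=
  (IsProjective.iff_projective (R := R) (P := ↑P)).mpr hP

lemma split_proj (P : ModuleCat.{u} R) (hP : Projective P) (hPf : Module.Finite R P) :
    ∃ (k : ℕ) (s : (Fin k → R) →ₗ[R] P) (r : ↑P →ₗ[R] (Fin k → R)),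
      s.comp r = LinearMap.id ∧ Function.Surjective s := by
  obtain ⟨k, s, hs⟩ := Module.Finite.exists_fin' R P
  have hproj : Module.Projective R ↑P := module_projective_of_projective P hP
  obtain ⟨r, hr⟩ := Module.projective_lifting_property s LinearMap.id hs
  exact ⟨k, s, r, hr, hs⟩

lemma descend {Q K' V₁ : ModuleCat.{u} R} (pW : Q ⟶ K') (hp : Function.Surjective pW)
    (A : ↑Q →ₗ[R] ↑V₁) (hker : ∀ q, pW q = 0 → A q = 0) :
    ∃ h : ↑K' →ₗ[R] ↑V₁, h.comp pW.hom = A := by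
  let e := LinearMap.quotKerEquivOfSurjective pW.hom hp
  have hle : LinearMap.ker pW.hom ≤ LinearMap.ker A := by
    intro q hq
    exact hker q hq
  let B := Submodule.liftQ (LinearMap.ker pW.hom) A hle
  refine ⟨B.comp (e.symm : ↑K' →ₗ[R] _), ?_⟩
  ext q
  show B (e.symm (pW q)) = A q
  have h1 : e.symm (pW q) = Submodule.Quotient.mk q := by
    apply e.injective
    rw [e.apply_symm_apply]
    show _ = e (Submodule.Quotient.mk q)
    simp [e, LinearMap.quotKerEquivOfSurjective]
  rw [h1]
  rfl

lemma extV_of_syzygy : ∀ (s : ℕ) (K X : ModuleCat.{u} R), IsSyzygy R s K X →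
    ∀ j : ℕ, extV R (j+1+s) X → extV R (j+1) K := by
  intro s
  induction s with
  | zero =>
    intro K X h j hX
    obtain ⟨e⟩ := h
    exact extV_of_iso e hX
  | succ s ih =>
    intro K X h j hX
    obtain ⟨Q, K'', iK, pK, hQ, hQf, hi, hp, hex, hsyz⟩ := h
    have h2 : extV R (j+1+1) K'' := ih K'' X hsyz (j+1)
      ((by omega : j+1+1+s = j+1+(s+1)) ▸ hX)
    exact extV_shift iK pK hQ hi hp hex j h2

lemma key : ∀ (c : ℕ) (X : ModuleCat.{u} R),
    (∀ i ≤ c, extV R i X) → ∀ (W : ModuleCat.{u} R), IsSyzygy R c W X →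
    ∀ (m : ℕ), c + 1 ≤ m → ∀ (N V : ModuleCat.{u} R), IsSyzygy R m V N →
    ∀ f : W ⟶ V, FactorsThroughProjective f.hom := by
  intro c
  induction c with
  | zero =>
    intro X hX W hW m hm N V hV f
    obtain ⟨e⟩ := hW
    obtain ⟨m', rfl⟩ : ∃ m', m = m'+1 := ⟨m-1, by omega⟩
    obtain ⟨P, V₁, iV, pV, hP, hPf, hiV, hpV, hexV, _⟩ := hV
    obtain ⟨k, s, r, hsr, hs⟩ := split_proj P hP hPf
    have hf : ∀ w : ↑W, f w = 0 := by
      intro w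
      have hcoord : ∀ l : Fin k, r (iV (f w)) l = 0 := by
        intro l
        let ψ : W ⟶ ModuleCat.of R R := ModuleCat.ofHom
          ((LinearMap.proj l).comp ((r.comp (iV.hom.comp f.hom))))
        have hψ : e.inv ≫ ψ = 0 := hom_eq_zero_of_extV₀ (hX 0 (by omega)) (e.inv ≫ ψ)
        have hw : e.inv (e.hom w) = w :=
          congrArg (fun t : W ⟶ W => t w) e.hom_inv_id
        have := congrArg (fun t : X ⟶ ModuleCat.of R R => t (e.hom w)) hψ
        simp only at this
        show ψ w = 0
        rw [← hw]
        exact this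
      have h0 : r (iV (f w)) = 0 := funext hcoord
      have h1 : iV (f w) = 0 := by
        have h2 := congrArg (fun t => (t : ↑P →ₗ[R] ↑P) (iV (f w))) hsr
        have h3 : iV (f w) = s (r (iV (f w))) := h2.symm
        rw [h3, h0, map_zero]
      apply hiV
      rw [h1, map_zero]
    refine ⟨R, inferInstance, inferInstance, inferInstance, 0, 0, ?_⟩
    ext w
    show (0 : ↑W →ₗ[R] ↑V) w = f w
    rw [hf w]
    rfl
  | succ c ih =>
    intro X hX W hW m hm N V hV f
    obtain ⟨Q, K', iW, pW, hQ, hQf, hiW, hpW, hexW, hsyzK⟩ := hW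
    obtain ⟨m', rfl⟩ : ∃ m', m = m'+1 := ⟨m-1, by omega⟩
    obtain ⟨P, V₁, iV, pV, hP, hPf, hiV, hpV, hexV, hsyzV⟩ := hV
    obtain ⟨k, s, r, hsr, hs⟩ := split_proj P hP hPf
    -- extension property along iW
    have hK1 : extV R 1 K' :=
      extV_of_syzygy c K' X hsyzK 0 ((by omega : (0:ℕ)+1+c = c+1) ▸ hX (c+1) le_rfl)
    have hext1 : ∀ ψ : W ⟶ ModuleCat.of R R, ∃ φ : Q ⟶ ModuleCat.of R R, iW ≫ φ = ψ :=
      fun ψ => extend_of_extV₁ iW pW hQ hiW hpW hexW hK1 ψ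
    -- build G : Q →ₗ P with G ∘ iW = iV ∘ f
    have hφ := fun l : Fin k => hext1 (ModuleCat.ofHom
      ((LinearMap.proj l).comp (r.comp (iV.hom.comp f.hom))))
    choose φ hφ using hφ
    let g' : ↑Q →ₗ[R] (Fin k → R) := LinearMap.pi (fun l => (φ l).hom)
    have hg' : ∀ w, g' (iW w) = r (iV (f w)) := by
      intro w
      funext l
      exact congrArg (fun t : W ⟶ ModuleCat.of R R => t w) (hφ l)
    let G : ↑Q →ₗ[R] ↑P := s.comp g'
    have hG : ∀ w, G (iW w) = iV (f w) := by
      intro w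
      show s (g' (iW w)) = iV (f w)
      rw [hg' w]
      exact congrArg (fun t => (t : ↑P →ₗ[R] ↑P) (iV (f w))) hsr
    -- descend pV ∘ G to h : K' →ₗ V₁
    have hker : ∀ q, pW q = 0 → (pV.hom.comp G) q = 0 := by
      intro q hq
      obtain ⟨w, rfl⟩ := (hexW q).1 hq
      show pV (G (iW w)) = 0
      rw [hG w]
      exact (hexV (iV (f w))).2 ⟨f w, rfl⟩
    obtain ⟨h, hh⟩ := descend pW hpW (pV.hom.comp G) hker
    -- IH : h factors through a projective module
    have hXc : ∀ i ≤ c, extV R i X := fun i hi => hX i (by omega)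
    obtain ⟨P', instA, instM, hproj, α, β, hβα⟩ :=
      ih X hXc K' hsyzK m' (by omega) N V₁ hsyzV (ModuleCat.ofHom h)
    -- lift β along pV
    have hprojP' : Module.Projective R P' := hproj
    obtain ⟨β', hβ'⟩ := Module.projective_lifting_property pV.hom β hpV
    -- u := G - β' ∘ α ∘ pW lands in the image of iV
    let u : ↑Q →ₗ[R] ↑P := G - (β'.comp (α.comp pW.hom))
    have hu : ∀ q, pV (u q) = 0 := by
      intro q
      have h1 : pV (G q) = h (pW q) :=
        (congrArg (fun t => (t : ↑Q →ₗ[R] ↑V₁) q) hh).symm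
      have h2 : pV (β' (α (pW q))) = β (α (pW q)) :=
        congrArg (fun t => (t : ↑P' →ₗ[R] ↑V₁) (α (pW q))) hβ'
      have h3 : β (α (pW q)) = h (pW q) :=
        congrArg (fun t => (t : ↑K' →ₗ[R] ↑V₁) (pW q)) hβα
      have : u q = G q - β' (α (pW q)) := rfl
      rw [this, map_sub, h1, h2, h3, sub_self]
    -- corestrict u to V
    let eV := LinearEquiv.ofInjective iV.hom hiV
    have hmem : ∀ q, u q ∈ LinearMap.range iV.hom := by
      intro q
      obtain ⟨v, hv⟩ := (hexV (u q)).1 (hu q)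
      exact ⟨v, hv⟩
    let u' : ↑Q →ₗ[R] LinearMap.range iV.hom :=
      u.codRestrict _ hmem
    let t : ↑Q →ₗ[R] ↑V := (eV.symm : _ →ₗ[R] ↑V).comp u'
    have ht : ∀ q, iV (t q) = u q := by
      intro q
      have h1 : ((eV (eV.symm (u' q))) : ↑P) = iV (t q) := by
        rw [LinearEquiv.ofInjective_apply]
        rfl
      rw [← h1, eV.apply_symm_apply]
      rfl
    -- conclude
    have hprojQ : Module.Projective R ↑Q := module_projective_of_projective Q hQ
    refine ⟨↑Q, inferInstance, inferInstance, hprojQ, iW.hom, t, ?_⟩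
    ext w
    show t (iW w) = f w
    apply hiV
    rw [ht (iW w)]
    have hpw : pW (iW w) = 0 := (hexW (iW w)).2 ⟨w, rfl⟩
    have : u (iW w) = G (iW w) - β' (α (pW (iW w))) := rfl
    rw [this, hpw, map_zero, map_zero, sub_zero, hG w]

end Stmt4Aux

/-- If `Ext^i_R(X,R) = 0` for `0 ≤ i ≤ c`, then every homomorphism
`Ω^c X → Ω^{c+n} Y` (`n ≥ 1`) factors through a projective module. -/
theorem stmt4 (R : Type u) [CommRing R] [IsNoetherianRing R]
    (X Y : ModuleCat.{u} R) [Module.Finite R X] [Module.Finite R Y]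
    (c n : ℕ) (hn : 1 ≤ n)
    (hgrade : ∀ i ≤ c, extZero R i X (ModuleCat.of R R))
    (W V : ModuleCat.{u} R) (hW : IsSyzygy R c W X) (hV : IsSyzygy R (c + n) V Y) :
    ∀ f : W →ₗ[R] V, FactorsThroughProjective f := by
  intro f
  have hn' : c + 1 ≤ c + n := by omega
  exact Stmt4Aux.key c X hgrade W hW (c+n) hn' Y V hV (ModuleCat.ofHom f)
end
end

section
/- Let R be a commutative noetherian ring and X a finitely generated R-module with grade_R X ≥ 1 (i.e., Hom_R(X,R) = 0). Then for any c with 0 ≤ c < grade_R X, the natural map End_R(Ω^c X) → \underline{End}_R(Ω^c X) composed with the c-fold syzygy isomorphism yields a ring isomorphism \underline{End}_R(Ω^c X) ≅ End_R(X). -/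
open CategoryTheory
universe u
noncomputable section

/-- The two-sided ideal of `End_R(W)` consisting of endomorphisms factoring through a
projective module. -/
def stableEndIdeal (R W : Type u) [CommRing R] [AddCommGroup W] [Module R W] :
    TwoSidedIdeal (Module.End R W) :=
  TwoSidedIdeal.mk' {f : Module.End R W | FactorsThroughProjective (f : W →ₗ[R] W)}
    ⟨R, inferInstance, inferInstance, inferInstance, 0, 0, by ext x; simp⟩
    (by
      rintro f₁ f₂ ⟨P₁, _, _, hP₁, g₁, h₁, rfl⟩ ⟨P₂, _, _, hP₂, g₂, h₂, rfl⟩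
      haveI := hP₁; haveI := hP₂
      exact ⟨P₁ × P₂, inferInstance, inferInstance, inferInstance,
        g₁.prod g₂, h₁.comp (LinearMap.fst R P₁ P₂) + h₂.comp (LinearMap.snd R P₁ P₂),
        by ext x; simp⟩)
    (by
      rintro f ⟨P, _, _, hP, g, h, rfl⟩
      exact ⟨P, inferInstance, inferInstance, hP, g, -h, by ext x; simp⟩)
    (by
      rintro x y ⟨P, _, _, hP, g, h, rfl⟩
      exact ⟨P, inferInstance, inferInstance, hP, g, x ∘ₗ h, by ext z; simp⟩)
    (by
      rintro x y ⟨P, _, _, hP, g, h, rfl⟩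
      exact ⟨P, inferInstance, inferInstance, hP, g ∘ₗ y, h, by ext z; simp⟩)

section Aux
variable {R : Type u} [CommRing R]

lemma subsingleton_iff_isZero (M : ModuleCat.{u} R) : Subsingleton M ↔ Limits.IsZero M := by
  constructor
  · intro h; exact ModuleCat.isZero_of_subsingleton M
  · intro h
    refine ⟨fun a b => ?_⟩
    have h0 : 𝟙 M = 0 := h.eq_of_src _ _
    have ha : a = (𝟙 M) a := rfl
    have hb : b = (𝟙 M) b := rfl
    rw [h0] at ha hb
    exact ha.trans hb.symm

lemma subsingleton_of_iso {M N : ModuleCat.{u} R} (e : M ≅ N) (h : Subsingleton M) :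
    Subsingleton N :=
  @Equiv.subsingleton _ _ e.toLinearEquiv.toEquiv.symm h

lemma extZero_iff_exactAt {Z Y : ModuleCat.{u} R} (Q : ProjectiveResolution Z) (n : ℕ) :
    extZero R n Z Y ↔ (Q.complex.linearYonedaObj R Y).ExactAt n := by
  rw [HomologicalComplex.exactAt_iff_isZero_homology, ← subsingleton_iff_isZero]
  exact ⟨fun h => subsingleton_of_iso (Q.isoExt n Y) h,
    fun h => subsingleton_of_iso (Q.isoExt n Y).symm h⟩

lemma extZero_succ_iff {Z Y : ModuleCat.{u} R} (Q : ProjectiveResolution Z) (n : ℕ) :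
    extZero R (n+1) Z Y ↔ ∀ x : Q.complex.X (n+1) ⟶ Y, Q.complex.d (n+2) (n+1) ≫ x = 0 →
      ∃ y : Q.complex.X n ⟶ Y, Q.complex.d (n+1) n ≫ y = x := by
  rw [extZero_iff_exactAt Q (n+1),
    HomologicalComplex.exactAt_iff' _ n (n+1) (n+2) (CochainComplex.prev_nat_succ n) (by simp),
    ShortComplex.moduleCat_exact_iff]
  constructor
  · intro h x hx
    obtain ⟨y, hy⟩ := h x hx
    exact ⟨y, hy⟩
  · intro h x hx
    obtain ⟨y, hy⟩ := h x hx
    exact ⟨y, hy⟩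

lemma hom_eq_zero_of_extZero_zero {Z Y : ModuleCat.{u} R} (h : extZero R 0 Z Y)
    (f : Z ⟶ Y) : f = 0 := by
  obtain ⟨Q⟩ := (inferInstance : HasProjectiveResolution Z).out
  rw [extZero_iff_exactAt Q 0,
    HomologicalComplex.exactAt_iff' _ 0 0 1 (CochainComplex.prev_nat_zero) (by simp),
    ShortComplex.moduleCat_exact_iff] at h
  have hx : Q.complex.d 1 0 ≫ (Q.π.f 0 ≫ f) = 0 := by
    erw [← Category.assoc, Q.complex_d_comp_π_f_zero, Limits.zero_comp]
  obtain ⟨y, hy⟩ := h (Q.π.f 0 ≫ f) hx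
  have hd : (Q.complex.linearYonedaObj R Y).d 0 0 = 0 :=
    HomologicalComplex.shape _ _ _ (by simp)
  rw [show (HomologicalComplex.sc' (Q.complex.linearYonedaObj R Y) 0 0 1).f
    = (Q.complex.linearYonedaObj R Y).d 0 0 from rfl, hd] at hy
  have : Q.π.f 0 ≫ f = 0 := by rw [← hy]; rfl
  have : Q.π.f 0 ≫ f = Q.π.f 0 ≫ 0 := this.trans Limits.comp_zero.symm
  exact (cancel_epi (Q.π.f 0)).mp this

section Splice
variable {W P K : ModuleCat.{u} R} (i : W ⟶ P) (p : P ⟶ K)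

def splicedComplex (Q : ProjectiveResolution W) : ChainComplex (ModuleCat.{u} R) ℕ :=
  ChainComplex.of
    (fun n => match n with | 0 => P | (n+1) => Q.complex.X n)
    (fun n => match n with
      | 0 => (Q.π.f 0 ≫ i : Q.complex.X 0 ⟶ P)
      | (n+1) => Q.complex.d (n+1) n)
    (fun n => match n with
      | 0 => by
          show Q.complex.d 1 0 ≫ Q.π.f 0 ≫ i = 0
          erw [← Category.assoc, Q.complex_d_comp_π_f_zero, Limits.zero_comp]
      | (n+1) => by
          show Q.complex.d (n+2) (n+1) ≫ Q.complex.d (n+1) n = 0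
          simp)

variable (Q : ProjectiveResolution W)

lemma splicedComplex_d_one_zero : (splicedComplex i Q).d 1 0 = Q.π.f 0 ≫ i :=
  rfl

lemma splicedComplex_d_succ (n : ℕ) :
    (splicedComplex i Q).d (n+2) (n+1) = Q.complex.d (n+1) n :=
  by unfold splicedComplex; simp [ChainComplex.of.d]

lemma spliced_ip (hex : Function.Exact i p) : i ≫ p = 0 := by
  ext w; exact hex.apply_apply_eq_zero w

lemma spliced_exact₀ (hex : Function.Exact i p) :
    (ShortComplex.mk ((splicedComplex i Q).d 1 0) p
      (by erw [splicedComplex_d_one_zero, Category.assoc, spliced_ip i p hex,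
        Limits.comp_zero])).Exact := by
  rw [ShortComplex.moduleCat_exact_iff]
  intro x hx
  obtain ⟨w, hw⟩ := (hex x).1 hx
  obtain ⟨q, hq⟩ := (ModuleCat.epi_iff_surjective (Q.π.f 0)).1 inferInstance w
  have hx2 : ((splicedComplex i Q).d 1 0) q = i ((Q.π.f 0) q) := by
    rw [splicedComplex_d_one_zero]; rfl
  refine ⟨q, ?_⟩
  show ((splicedComplex i Q).d 1 0) q = x
  rw [hx2, hq, hw]

def splicedResolution (hi : Function.Injective i) (hp : Function.Surjective p)
    (hex : Function.Exact i p) [Projective P] : ProjectiveResolution K where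
  complex := splicedComplex i Q
  projective n := by
    cases n with
    | zero => exact (inferInstance : Projective P)
    | succ n => exact Q.projective n
  π := (ChainComplex.toSingle₀Equiv _ _).symm ⟨p, by
    erw [splicedComplex_d_one_zero, Category.assoc, spliced_ip i p hex, Limits.comp_zero]⟩
  quasiIso := ⟨fun n => by
    cases n with
    | zero =>
      rw [ChainComplex.quasiIsoAt₀_iff, ShortComplex.quasiIso_iff_of_zeros']
      · refine (ShortComplex.exact_and_epi_g_iff_of_iso ?_).2
          ⟨spliced_exact₀ i p Q hex, (ModuleCat.epi_iff_surjective p).2 hp⟩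
        refine ShortComplex.isoMk (Iso.refl _) (Iso.refl _) (Iso.refl _) (by exact (Category.id_comp _).trans (Category.comp_id _).symm) ?_
        dsimp
        erw [Category.id_comp]
      all_goals rfl
    | succ n =>
      rw [quasiIsoAt_iff_exactAt']
      · rw [HomologicalComplex.exactAt_iff' _ (n+2) (n+1) n (by simp) (by simp),
          ShortComplex.moduleCat_exact_iff]
        intro x hx
        cases n with
        | zero =>
          -- x : Q.X 0, goal: (π0 ≫ i) x = 0 at level: sc' (2,1,0): f = spliced.d 2 1 = Q.d 1 0, g = spliced.d 1 0 = π0 ≫ i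
          have hx' : i ((Q.π.f 0) x) = 0 := by
            have h1 : ((splicedComplex i Q).d 1 0) x = i ((Q.π.f 0) x) := by
              rw [splicedComplex_d_one_zero]; rfl
            rw [← h1]
            exact hx
          have h0 : (Q.π.f 0) x = 0 := by
            apply hi
            exact hx'.trans (map_zero _).symm
          obtain ⟨y, hy⟩ := (ShortComplex.moduleCat_exact_iff _ |>.1 Q.exact₀) x h0
          refine ⟨y, ?_⟩
          show ((splicedComplex i Q).d 2 1) y = x
          have : ((splicedComplex i Q).d 2 1) y = (Q.complex.d 1 0) y := by
            rw [splicedComplex_d_succ]; rfl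
          rw [this]; exact hy
        | succ m =>
          have hx' : (Q.complex.d (m+1) m) x = 0 := by
            have h1 : ((splicedComplex i Q).d (m+2) (m+1)) x = (Q.complex.d (m+1) m) x := by
              rw [splicedComplex_d_succ]; rfl
            rw [← h1]
            exact hx
          obtain ⟨y, hy⟩ := (ShortComplex.moduleCat_exact_iff _ |>.1 (Q.exact_succ m)) x hx'
          refine ⟨y, ?_⟩
          show ((splicedComplex i Q).d (m+3) (m+2)) y = x
          have h2 : ((splicedComplex i Q).d (m+3) (m+2)) y = (Q.complex.d (m+2) (m+1)) y := by
            rw [splicedComplex_d_succ]; rfl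
          rw [h2]; exact hy
      · apply ChainComplex.exactAt_succ_single_obj⟩
end Splice

section Helpers
variable {P K M W : Type u} [AddCommGroup P] [Module R P] [AddCommGroup K] [Module R K]
  [AddCommGroup M] [Module R M] [AddCommGroup W] [Module R W]

lemma descend_surj (π : P →ₗ[R] K) (hp : Function.Surjective π)
    (D : P →ₗ[R] M) (h : ∀ x, π x = 0 → D x = 0) : ∃ v : K →ₗ[R] M, v ∘ₗ π = D := by
  refine ⟨(Submodule.liftQ (LinearMap.ker π) D (fun x hx => h x (LinearMap.mem_ker.1 hx))) ∘ₗ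
    (π.quotKerEquivOfSurjective hp).symm.toLinearMap, ?_⟩
  ext x
  have hs : (π.quotKerEquivOfSurjective hp).symm (π x) = Submodule.Quotient.mk x := by
    rw [LinearEquiv.symm_apply_eq]
    simp only [LinearMap.quotKerEquivOfSurjective, LinearMap.quotKerEquivRange,
      LinearEquiv.ofTop, LinearEquiv.trans_apply]
    rfl
  simp only [LinearMap.comp_apply, LinearEquiv.coe_coe, hs]
  rfl

lemma restrict_inj (ι : W →ₗ[R] P) (hi : Function.Injective ι) (π : P →ₗ[R] K)
    (hex : Function.Exact ι π) (D : M →ₗ[R] P) (h : ∀ m, π (D m) = 0) :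
    ∃ r : M →ₗ[R] W, ι ∘ₗ r = D := by
  have hmem : ∀ m, D m ∈ LinearMap.range ι := fun m => (hex (D m)).1 (h m)
  refine ⟨(LinearEquiv.ofInjective ι hi).symm.toLinearMap ∘ₗ
    (D.codRestrict (LinearMap.range ι) hmem), ?_⟩
  ext m
  show ι ((LinearEquiv.ofInjective ι hi).symm ⟨D m, hmem m⟩) = D m
  have := (LinearEquiv.ofInjective ι hi).apply_symm_apply ⟨D m, hmem m⟩
  have h2 : ι ((LinearEquiv.ofInjective ι hi).symm ⟨D m, hmem m⟩)
      = ((LinearEquiv.ofInjective ι hi) ((LinearEquiv.ofInjective ι hi).symm ⟨D m, hmem m⟩) : P) := by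
    rw [LinearEquiv.ofInjective_apply]
  rw [h2, this]
end Helpers

section Extend
variable {W P V : Type u} [AddCommGroup W] [Module R W] [AddCommGroup P] [Module R P]
  [AddCommGroup V] [Module R V]

lemma extend_to_projective (ι : W →ₗ[R] P) [Module.Finite R W]
    (hext : ∀ f : W →ₗ[R] R, ∃ g : P →ₗ[R] R, g ∘ₗ ι = f)
    (hV : Module.Projective R V) (f : W →ₗ[R] V) : ∃ g : P →ₗ[R] V, g ∘ₗ ι = f := by
  classical
  obtain ⟨s, hs⟩ := hV.out
  -- generators of W
  obtain ⟨t, ht⟩ := (Module.finite_def.1 ‹Module.Finite R W›)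
  set T : Finset V := t.sup (fun w => (s (f w)).support) with hT
  -- all supports are inside T
  have hsupp : ∀ w : W, (s (f w)).support ⊆ T := by
    intro w
    have hw : w ∈ Submodule.span R (t : Set W) := by rw [ht]; trivial
    refine Submodule.span_induction ?_ ?_ ?_ ?_ hw
    · intro x hx
      exact (hT ▸ Finset.le_sup (f := fun w => (s (f w)).support) hx : _)
    · simp
    · intro x y _ _ hx hy
      have : (s (f (x+y))).support ⊆ (s (f x)).support ∪ (s (f y)).support := by
        have h1 : s (f (x+y)) = s (f x) + s (f y) := by rw [map_add, map_add]
        rw [h1]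
        exact Finsupp.support_add
      exact this.trans (Finset.union_subset hx hy)
    · intro r x _ hx
      refine Finset.Subset.trans ?_ hx
      simp only [map_smul]
      exact Finsupp.support_smul
  -- choose extensions of all coordinates
  have hcomp : ∀ a : V, ∃ g : P →ₗ[R] R, g ∘ₗ ι = (Finsupp.lapply a) ∘ₗ s ∘ₗ f :=
    fun a => hext _
  choose ga hga using hcomp
  set G0 : P →ₗ[R] (V →₀ R) := ∑ a ∈ T, (Finsupp.lsingle a) ∘ₗ (ga a) with hG0
  refine ⟨(Finsupp.linearCombination R id) ∘ₗ G0, ?_⟩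
  have key : G0 ∘ₗ ι = s ∘ₗ f := by
    refine LinearMap.ext fun w => ?_
    show (∑ a ∈ T, (Finsupp.lsingle a) ∘ₗ (ga a)) (ι w) = s (f w)
    rw [LinearMap.sum_apply]
    have h1 : ∀ a : V, ((Finsupp.lsingle a) ∘ₗ (ga a)) (ι w)
        = Finsupp.single a ((s (f w)) a) := by
      intro a
      have := congrArg (fun (g : W →ₗ[R] R) => g w) (hga a)
      simp only [LinearMap.comp_apply] at this ⊢
      rw [this]
      rfl
    rw [Finset.sum_congr rfl (fun a _ => h1 a),
      ← Finset.sum_subset (hsupp w) (fun x _ hx => by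
        rw [Finsupp.notMem_support_iff.1 hx, Finsupp.single_zero])]
    exact Finsupp.sum_single _
  have : ((Finsupp.linearCombination R id) ∘ₗ G0) ∘ₗ ι
      = (Finsupp.linearCombination R id) ∘ₗ (s ∘ₗ f) := by
    rw [LinearMap.comp_assoc, key]
  rw [this]
  ext w
  simp only [LinearMap.comp_apply]
  exact hs (f w)
end Extend

lemma mem_stableEndIdeal {W : Type u} [AddCommGroup W] [Module R W] (f : Module.End R W) :
    f ∈ stableEndIdeal R W ↔ FactorsThroughProjective (f : W →ₗ[R] W) :=
  TwoSidedIdeal.mem_mk' _ _ _ _ _ _ _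

section Builder
variable {A B : Type*} [Ring A] [Ring B] (I : TwoSidedIdeal A) (J : TwoSidedIdeal B)

def quotLift (F : A →+* J.ringCon.Quotient) (hF : ∀ a ∈ I, F a = 0) :
    I.ringCon.Quotient → J.ringCon.Quotient := fun q =>
  Quotient.liftOn' q F (fun a a' h => by
    have h1 : a - a' ∈ I := (TwoSidedIdeal.rel_iff I a a').1 h
    have h2 : F (a - a') = 0 := hF _ h1
    rw [map_sub, sub_eq_zero] at h2
    exact h2)

lemma quotLift_mk (F : A →+* J.ringCon.Quotient) (hF : ∀ a ∈ I, F a = 0) (a : A) :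
    quotLift I J F hF (a : I.ringCon.Quotient) = F a := rfl

/-- Build a ring equivalence between quotients by two-sided ideals from ring homs into the
quotients. -/
def mkQuotEquiv (F : A →+* J.ringCon.Quotient) (G : B →+* I.ringCon.Quotient)
    (hF : ∀ a ∈ I, F a = 0) (hG : ∀ b ∈ J, G b = 0)
    (hFG : ∀ a : A, ∃ b : B, F a = ↑b ∧ G b = ↑a)
    (hGF : ∀ b : B, ∃ a : A, G b = ↑a ∧ F a = ↑b) :
    I.ringCon.Quotient ≃+* J.ringCon.Quotient where
  toFun := quotLift I J F hF
  invFun := quotLift J I G hG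
  left_inv := by
    rintro ⟨a⟩
    obtain ⟨b, hb1, hb2⟩ := hFG a
    show quotLift J I G hG (quotLift I J F hF (a : I.ringCon.Quotient)) = (a : I.ringCon.Quotient)
    rw [quotLift_mk, hb1, quotLift_mk, hb2]
  right_inv := by
    rintro ⟨b⟩
    obtain ⟨a, ha1, ha2⟩ := hGF b
    show quotLift I J F hF (quotLift J I G hG (b : J.ringCon.Quotient)) = (b : J.ringCon.Quotient)
    rw [quotLift_mk, ha1, quotLift_mk, ha2]
  map_mul' := by
    rintro ⟨a⟩ ⟨a'⟩
    have key : quotLift I J F hF ((a : I.ringCon.Quotient) * (a' : I.ringCon.Quotient))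
        = quotLift I J F hF (a : I.ringCon.Quotient)
          * quotLift I J F hF (a' : I.ringCon.Quotient) := by
      rw [← RingCon.coe_mul, quotLift_mk, quotLift_mk, quotLift_mk, map_mul]
    exact key
  map_add' := by
    rintro ⟨a⟩ ⟨a'⟩
    have key : quotLift I J F hF ((a : I.ringCon.Quotient) + (a' : I.ringCon.Quotient))
        = quotLift I J F hF (a : I.ringCon.Quotient)
          + quotLift I J F hF (a' : I.ringCon.Quotient) := by
      rw [← RingCon.coe_add, quotLift_mk, quotLift_mk, quotLift_mk, map_add]
    exact key
end Builder

section Step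
variable {W P K : Type u} [AddCommGroup W] [Module R W] [AddCommGroup P] [Module R P]
  [AddCommGroup K] [Module R K]

theorem step_equiv (ι : W →ₗ[R] P) (π : P →ₗ[R] K)
    (hi : Function.Injective ι) (hp : Function.Surjective π) (hex : Function.Exact ι π)
    (hP : Module.Projective R P) [Module.Finite R W]
    (hext : ∀ f : W →ₗ[R] R, ∃ g : P →ₗ[R] R, g ∘ₗ ι = f) :
    Nonempty ((stableEndIdeal R W).ringCon.Quotient ≃+* (stableEndIdeal R K).ringCon.Quotient) := by
  haveI := hP
  have hπι : ∀ w, π (ι w) = 0 := fun w => hex.apply_apply_eq_zero w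
  -- the W → K direction data
  have EXT : ∀ f : Module.End R W, ∃ G : P →ₗ[R] P, G ∘ₗ ι = ι ∘ₗ f :=
    fun f => extend_to_projective ι hext hP (ι ∘ₗ f)
  choose Gf hGf using EXT
  have DESC : ∀ f : Module.End R W, ∃ ρ : Module.End R K, ρ ∘ₗ π = π ∘ₗ Gf f := by
    intro f
    refine descend_surj π hp (π ∘ₗ Gf f) (fun x hx => ?_)
    obtain ⟨w, rfl⟩ := (hex x).1 hx
    have h1 : Gf f (ι w) = ι (f w) := congrArg (fun (g : W →ₗ[R] P) => g w) (hGf f)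
    simp only [LinearMap.comp_apply, h1, hπι]
  choose ρf hρf using DESC
  -- key uniqueness lemma for the W → K direction
  have keyK : ∀ (f : Module.End R W) (G : P →ₗ[R] P), G ∘ₗ ι = ι ∘ₗ f →
      ∀ ρ : Module.End R K, ρ ∘ₗ π = π ∘ₗ G →
      ((ρf f : (stableEndIdeal R K).ringCon.Quotient) = ↑ρ) := by
    intro f G hG ρ hρ
    have hd : ∀ x, π x = 0 → (G - Gf f) x = 0 := by
      intro x hx
      obtain ⟨w, rfl⟩ := (hex x).1 hx
      have h1 : Gf f (ι w) = ι (f w) := congrArg (fun (g : W →ₗ[R] P) => g w) (hGf f)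
      have h2 : G (ι w) = ι (f w) := congrArg (fun (g : W →ₗ[R] P) => g w) hG
      simp [LinearMap.sub_apply, h1, h2]
    obtain ⟨v, hv⟩ := descend_surj π hp (G - Gf f) hd
    have hcomp : (ρ - ρf f) ∘ₗ π = (π ∘ₗ v) ∘ₗ π := by
      rw [LinearMap.sub_comp, hρ, hρf, LinearMap.comp_assoc, hv, LinearMap.comp_sub]
    have heq : ρ - ρf f = π ∘ₗ v := (LinearMap.cancel_right hp).1 hcomp
    rw [RingCon.eq, TwoSidedIdeal.rel_iff, mem_stableEndIdeal]
    refine ⟨P, inferInstance, inferInstance, hP, -v, π, ?_⟩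
    have hneg : π ∘ₗ (-v) = -(π ∘ₗ v) := by
      refine LinearMap.ext fun x => ?_; simp
    show π ∘ₗ (-v) = ρf f - ρ
    rw [hneg, ← heq, neg_sub]
  -- the K → W direction data
  have LIFT : ∀ f : Module.End R K, ∃ G : P →ₗ[R] P, π ∘ₗ G = f ∘ₗ π :=
    fun f => Module.projective_lifting_property π (f ∘ₗ π) hp
  choose Hf hHf using LIFT
  have RES : ∀ f : Module.End R K, ∃ r : Module.End R W, ι ∘ₗ r = Hf f ∘ₗ ι := by
    intro f
    refine restrict_inj ι hi π hex (Hf f ∘ₗ ι) (fun m => ?_)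
    have h1 : π (Hf f (ι m)) = f (π (ι m)) :=
      congrArg (fun (g : P →ₗ[R] K) => g (ι m)) (hHf f)
    simp only [LinearMap.comp_apply, h1, hπι, map_zero]
  choose rf hrf using RES
  have keyW : ∀ (f : Module.End R K) (G : P →ₗ[R] P), π ∘ₗ G = f ∘ₗ π →
      ∀ r : Module.End R W, ι ∘ₗ r = G ∘ₗ ι →
      ((rf f : (stableEndIdeal R W).ringCon.Quotient) = ↑r) := by
    intro f G hG r hr
    have hd : ∀ x, π ((G - Hf f) x) = 0 := by
      intro x
      have h1 : π (G x) = f (π x) := congrArg (fun (g : P →ₗ[R] K) => g x) hG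
      have h2 : π (Hf f x) = f (π x) := congrArg (fun (g : P →ₗ[R] K) => g x) (hHf f)
      simp [LinearMap.sub_apply, h1, h2]
    obtain ⟨u, hu⟩ := restrict_inj ι hi π hex (G - Hf f) hd
    have hcomp : ι ∘ₗ (r - rf f) = ι ∘ₗ (u ∘ₗ ι) := by
      rw [LinearMap.comp_sub, hr, hrf, ← LinearMap.comp_assoc, hu, LinearMap.sub_comp]
    have heq : r - rf f = u ∘ₗ ι := (LinearMap.cancel_left hi).1 hcomp
    rw [RingCon.eq, TwoSidedIdeal.rel_iff, mem_stableEndIdeal]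
    refine ⟨P, inferInstance, inferInstance, hP, ι, -u, ?_⟩
    have hneg : (-u) ∘ₗ ι = -(u ∘ₗ ι) := by
      refine LinearMap.ext fun x => ?_; simp
    show (-u) ∘ₗ ι = rf f - r
    rw [hneg, ← heq, neg_sub]
  -- assemble ring homs
  set QW := (stableEndIdeal R W).ringCon.Quotient
  set QK := (stableEndIdeal R K).ringCon.Quotient
  have Fmul : ∀ f g : Module.End R W, ((ρf (f * g) : QK)) = ↑(ρf f * ρf g) := by
    intro f g
    refine keyK (f * g) (Gf f ∘ₗ Gf g) ?_ (ρf f * ρf g) ?_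
    · refine LinearMap.ext fun w => ?_
      have h1 : Gf g (ι w) = ι (g w) := congrArg (fun (q : W →ₗ[R] P) => q w) (hGf g)
      have h2 : Gf f (ι (g w)) = ι (f (g w)) :=
        congrArg (fun (q : W →ₗ[R] P) => q (g w)) (hGf f)
      show Gf f (Gf g (ι w)) = ι ((f * g) w)
      rw [h1, h2]; rfl
    · refine LinearMap.ext fun x => ?_
      have h1 : ρf g (π x) = π (Gf g x) := congrArg (fun (q : P →ₗ[R] K) => q x) (hρf g)
      have h2 : ρf f (π (Gf g x)) = π (Gf f (Gf g x)) :=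
        congrArg (fun (q : P →ₗ[R] K) => q (Gf g x)) (hρf f)
      show ρf f (ρf g (π x)) = π (Gf f (Gf g x))
      rw [h1, h2]
  have Fadd : ∀ f g : Module.End R W, ((ρf (f + g) : QK)) = ↑(ρf f + ρf g) := by
    intro f g
    refine keyK (f + g) (Gf f + Gf g) ?_ (ρf f + ρf g) ?_
    · rw [LinearMap.add_comp, hGf, hGf, LinearMap.comp_add]
    · rw [LinearMap.add_comp, hρf, hρf, LinearMap.comp_add]
  have Fone : ((ρf 1 : QK)) = 1 := by
    have h1 := keyK 1 LinearMap.id (by rw [LinearMap.id_comp]; rfl) 1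
      (by rw [LinearMap.comp_id]; rfl)
    rw [h1]
    rfl
  let F : Module.End R W →+* QK :=
    { toFun := fun f => ↑(ρf f)
      map_one' := Fone
      map_mul' := fun f g => by
        show ((ρf (f * g) : QK)) = ((ρf f : QK)) * ((ρf g : QK))
        rw [Fmul]; rfl
      map_zero' := by
        show ((ρf 0 : QK)) = 0
        have h1 := keyK 0 0 (by simp) 0 (by simp)
        rw [h1]; rfl
      map_add' := fun f g => by
        show ((ρf (f + g) : QK)) = ((ρf f : QK)) + ((ρf g : QK))
        rw [Fadd]; rfl }
  have Gmul : ∀ f g : Module.End R K, ((rf (f * g) : QW)) = ↑(rf f * rf g) := by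
    intro f g
    refine keyW (f * g) (Hf f ∘ₗ Hf g) ?_ (rf f * rf g) ?_
    · refine LinearMap.ext fun x => ?_
      have h1 : π (Hf f (Hf g x)) = f (π (Hf g x)) :=
        congrArg (fun (q : P →ₗ[R] K) => q (Hf g x)) (hHf f)
      have h2 : π (Hf g x) = g (π x) := congrArg (fun (q : P →ₗ[R] K) => q x) (hHf g)
      show π (Hf f (Hf g x)) = (f * g) (π x)
      rw [h1, h2]; rfl
    · refine LinearMap.ext fun w => ?_
      have h1 : ι (rf g w) = Hf g (ι w) := congrArg (fun (q : W →ₗ[R] P) => q w) (hrf g)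
      have h2 : ι (rf f (rf g w)) = Hf f (ι (rf g w)) :=
        congrArg (fun (q : W →ₗ[R] P) => q (rf g w)) (hrf f)
      show ι (rf f (rf g w)) = Hf f (Hf g (ι w))
      rw [h2, h1]
  have Gadd : ∀ f g : Module.End R K, ((rf (f + g) : QW)) = ↑(rf f + rf g) := by
    intro f g
    refine keyW (f + g) (Hf f + Hf g) ?_ (rf f + rf g) ?_
    · rw [LinearMap.comp_add, hHf, hHf, LinearMap.add_comp]
    · rw [LinearMap.comp_add, hrf, hrf, LinearMap.add_comp]
  let G : Module.End R K →+* QW :=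
    { toFun := fun f => ↑(rf f)
      map_one' := by
        show ((rf 1 : QW)) = 1
        have h1 := keyW 1 LinearMap.id (by rw [LinearMap.comp_id]; rfl) 1
          (by rw [LinearMap.id_comp]; rfl)
        rw [h1]; rfl
      map_mul' := fun f g => by
        show ((rf (f * g) : QW)) = ((rf f : QW)) * ((rf g : QW))
        rw [Gmul]; rfl
      map_zero' := by
        show ((rf 0 : QW)) = 0
        have h1 := keyW 0 0 (by simp) 0 (by simp)
        rw [h1]; rfl
      map_add' := fun f g => by
        show ((rf (f + g) : QW)) = ((rf f : QW)) + ((rf g : QW))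
        rw [Gadd]; rfl }
  -- F kills the ideal
  have hFkill : ∀ f ∈ stableEndIdeal R W, F f = 0 := by
    intro f hf
    obtain ⟨V, _, _, hV, g, h, hcomp⟩ := (mem_stableEndIdeal f).1 hf
    obtain ⟨g', hg'⟩ := extend_to_projective ι hext hV g
    have h1 := keyK f (ι ∘ₗ h ∘ₗ g') ?_ 0 ?_
    · show ((ρf f : QK)) = 0
      rw [h1]; rfl
    · refine LinearMap.ext fun w => ?_
      have h1 : g' (ι w) = g w := congrArg (fun (q : W →ₗ[R] V) => q w) hg'
      have h2 : h (g w) = f w := congrArg (fun (q : W →ₗ[R] W) => q w) hcomp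
      show ι (h (g' (ι w))) = ι (f w)
      rw [h1, h2]
    · rw [LinearMap.zero_comp]
      refine LinearMap.ext fun x => ?_
      simp [hπι]
  -- G kills the ideal
  have hGkill : ∀ f ∈ stableEndIdeal R K, G f = 0 := by
    intro f hf
    obtain ⟨V, _, _, hV, g, h, hcomp⟩ := (mem_stableEndIdeal f).1 hf
    haveI := hV
    obtain ⟨h', hh'⟩ := Module.projective_lifting_property π h hp
    have h1 := keyW f (h' ∘ₗ g ∘ₗ π) ?_ 0 ?_
    · show ((rf f : QW)) = 0
      rw [h1]; rfl
    · refine LinearMap.ext fun x => ?_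
      have h1 : π (h' (g (π x))) = h (g (π x)) :=
        congrArg (fun (q : V →ₗ[R] K) => q (g (π x))) hh'
      have h2 : h (g (π x)) = f (π x) := congrArg (fun (q : K →ₗ[R] K) => q (π x)) hcomp
      show π (h' (g (π x))) = f (π x)
      rw [h1, h2]
    · rw [LinearMap.comp_zero]
      refine LinearMap.ext fun w => ?_
      simp [hπι]
  -- composite conditions
  have hFG : ∀ f : Module.End R W, ∃ ρ : Module.End R K, F f = ↑ρ ∧ G ρ = ↑f := by
    intro f
    refine ⟨ρf f, rfl, ?_⟩
    exact keyW (ρf f) (Gf f) (hρf f).symm f (hGf f).symm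
  have hGF : ∀ ρ : Module.End R K, ∃ f : Module.End R W, G ρ = ↑f ∧ F f = ↑ρ := by
    intro ρ
    refine ⟨rf ρ, rfl, ?_⟩
    exact keyK (rf ρ) (Hf ρ) (hrf ρ).symm ρ (hHf ρ).symm
  exact ⟨mkQuotEquiv _ _ F G hFkill hGkill hFG hGF⟩
end Step

section Congr
variable {M N : Type u} [AddCommGroup M] [Module R M] [AddCommGroup N] [Module R N]

theorem quot_congr (e : M ≃ₗ[R] N) :
    Nonempty ((stableEndIdeal R M).ringCon.Quotient ≃+* (stableEndIdeal R N).ringCon.Quotient) := by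
  set QM := (stableEndIdeal R M).ringCon.Quotient
  set QN := (stableEndIdeal R N).ringCon.Quotient
  have hfact : ∀ f : Module.End R M, FactorsThroughProjective f →
      FactorsThroughProjective ((e.toLinearMap ∘ₗ f ∘ₗ e.symm.toLinearMap : N →ₗ[R] N)) := by
    rintro f ⟨V, _, _, hV, g, h, rfl⟩
    exact ⟨V, inferInstance, inferInstance, hV, g ∘ₗ e.symm.toLinearMap,
      e.toLinearMap ∘ₗ h, by refine LinearMap.ext fun n => ?_; rfl⟩
  have hfact' : ∀ f : Module.End R N, FactorsThroughProjective f →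
      FactorsThroughProjective ((e.symm.toLinearMap ∘ₗ f ∘ₗ e.toLinearMap : M →ₗ[R] M)) := by
    rintro f ⟨V, _, _, hV, g, h, rfl⟩
    exact ⟨V, inferInstance, inferInstance, hV, g ∘ₗ e.toLinearMap,
      e.symm.toLinearMap ∘ₗ h, by refine LinearMap.ext fun n => ?_; rfl⟩
  let σ : Module.End R M ≃+* Module.End R N :=
    { toFun := fun f => e.toLinearMap ∘ₗ f ∘ₗ e.symm.toLinearMap
      invFun := fun f => e.symm.toLinearMap ∘ₗ f ∘ₗ e.toLinearMap
      left_inv := fun f => by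
        refine LinearMap.ext fun m => ?_
        simp
      right_inv := fun f => by
        refine LinearMap.ext fun n => ?_
        simp
      map_mul' := fun f g => by
        refine LinearMap.ext fun n => ?_
        show e (f (g (e.symm n))) = e (f (e.symm (e (g (e.symm n)))))
        rw [e.symm_apply_apply]
      map_add' := fun f g => by
        refine LinearMap.ext fun n => ?_
        simp }
  let F : Module.End R M →+* QN := ((stableEndIdeal R N).ringCon.mk').comp σ.toRingHom
  let G : Module.End R N →+* QM := ((stableEndIdeal R M).ringCon.mk').comp σ.symm.toRingHom
  refine ⟨mkQuotEquiv _ _ F G ?_ ?_ ?_ ?_⟩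
  · intro f hf
    show ((σ f : Module.End R N) : QN) = 0
    have h0 : ((0 : Module.End R N) : QN) = 0 := rfl
    rw [← h0, RingCon.eq, TwoSidedIdeal.rel_iff, sub_zero, mem_stableEndIdeal]
    exact hfact f ((mem_stableEndIdeal f).1 hf)
  · intro f hf
    show ((σ.symm f : Module.End R M) : QM) = 0
    have h0 : ((0 : Module.End R M) : QM) = 0 := rfl
    rw [← h0, RingCon.eq, TwoSidedIdeal.rel_iff, sub_zero, mem_stableEndIdeal]
    exact hfact' f ((mem_stableEndIdeal f).1 hf)
  · intro f
    refine ⟨σ f, rfl, ?_⟩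
    show ((σ.symm (σ f) : Module.End R M) : QM) = ↑f
    rw [σ.symm_apply_apply]
  · intro f
    refine ⟨σ.symm f, rfl, ?_⟩
    show ((σ (σ.symm f) : Module.End R N) : QN) = ↑f
    rw [σ.apply_symm_apply]

theorem quot_bot (h0 : ∀ f : M →ₗ[R] R, f = 0) :
    Nonempty ((stableEndIdeal R M).ringCon.Quotient ≃+* Module.End R M) := by
  have hzero : ∀ f : Module.End R M, f ∈ stableEndIdeal R M → f = 0 := by
    intro f hf
    obtain ⟨V, _, _, hV, g, h, hcomp⟩ := (mem_stableEndIdeal f).1 hf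
    obtain ⟨s, hs⟩ := hV.out
    have hg : ∀ m, s (g m) = 0 := by
      intro m
      refine Finsupp.ext fun a => ?_
      have : (Finsupp.lapply a ∘ₗ s ∘ₗ g : M →ₗ[R] R) = 0 := h0 _
      have := congrArg (fun (q : M →ₗ[R] R) => q m) this
      simpa using this
    have hgz : ∀ m, g m = 0 := by
      intro m
      have := hs (g m)
      rw [hg m] at this
      simpa using this.symm
    refine LinearMap.ext fun m => ?_
    have := congrArg (fun (q : M →ₗ[R] M) => q m) hcomp
    simp only [LinearMap.comp_apply] at this
    rw [← this, hgz, map_zero]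
    rfl
  refine ⟨(RingEquiv.ofBijective ((stableEndIdeal R M).ringCon.mk') ⟨?_, ?_⟩).symm⟩
  · intro a b hab
    have : a - b ∈ stableEndIdeal R M := by
      rw [← TwoSidedIdeal.rel_iff]
      exact (RingCon.eq _).1 hab
    have := hzero _ this
    exact sub_eq_zero.1 this
  · intro q
    induction q using Quotient.inductionOn' with
    | h a => exact ⟨a, rfl⟩
end Congr

end Aux

section Glue
variable {R : Type u} [CommRing R]

lemma extZero_of_iso {X X' Y : ModuleCat.{u} R} (e : X ≅ X') (n : ℕ)
    (h : extZero R n X Y) : extZero R n X' Y := by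
  have iso : ((Ext R (ModuleCat.{u} R) n).obj (Opposite.op X)).obj Y ≅
      ((Ext R (ModuleCat.{u} R) n).obj (Opposite.op X')).obj Y :=
    ((Ext R (ModuleCat.{u} R) n).mapIso e.symm.op).app Y
  exact subsingleton_of_iso iso h

lemma extZero_shift {W P K : ModuleCat.{u} R} (i : W ⟶ P) (p : P ⟶ K)
    (hi : Function.Injective i) (hp : Function.Surjective p) (hex : Function.Exact i p)
    [Projective P] (Y : ModuleCat.{u} R) (n : ℕ) :
    extZero R (n+2) K Y ↔ extZero R (n+1) W Y := by
  obtain ⟨Q⟩ := (inferInstance : HasProjectiveResolution W).out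
  rw [extZero_succ_iff (splicedResolution i p Q hi hp hex) (n+1), extZero_succ_iff Q n]
  have e1 : (splicedResolution i p Q hi hp hex).complex.d (n+3) (n+2)
      = Q.complex.d (n+2) (n+1) := splicedComplex_d_succ i Q (n+1)
  have e2 : (splicedResolution i p Q hi hp hex).complex.d (n+2) (n+1)
      = Q.complex.d (n+1) n := splicedComplex_d_succ i Q n
  constructor
  · intro h x hx
    obtain ⟨y, hy⟩ := h x (by rw [e1]; exact hx)
    exact ⟨y, by rw [e2] at hy; exact hy⟩
  · intro h x hx
    obtain ⟨y, hy⟩ := h x (by rw [e1] at hx; exact hx)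
    exact ⟨y, by rw [e2]; exact hy⟩

lemma ext1_surj {W P K : ModuleCat.{u} R} (i : W ⟶ P) (p : P ⟶ K)
    (hi : Function.Injective i) (hp : Function.Surjective p) (hex : Function.Exact i p)
    [Projective P] {Y : ModuleCat.{u} R} (h : extZero R 1 K Y) (f : W ⟶ Y) :
    ∃ g : P ⟶ Y, i ≫ g = f := by
  obtain ⟨Q⟩ := (inferInstance : HasProjectiveResolution W).out
  rw [extZero_succ_iff (splicedResolution i p Q hi hp hex) 0] at h
  have e1 : (splicedResolution i p Q hi hp hex).complex.d 2 1
      = Q.complex.d 1 0 := splicedComplex_d_succ i Q 0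
  have e2 : (splicedResolution i p Q hi hp hex).complex.d 1 0
      = Q.π.f 0 ≫ i := splicedComplex_d_one_zero i Q
  have hx : (splicedResolution i p Q hi hp hex).complex.d 2 1 ≫ (Q.π.f 0 ≫ f) = 0 := by
    erw [e1, ← Category.assoc, Q.complex_d_comp_π_f_zero, Limits.zero_comp]
  obtain ⟨y, hy⟩ := h (Q.π.f 0 ≫ f) hx
  refine ⟨y, ?_⟩
  erw [e2, Category.assoc] at hy
  exact (cancel_epi (Q.π.f 0)).1 hy

lemma extZero_of_syzygy (Y : ModuleCat.{u} R) :
    ∀ (j : ℕ) (K N : ModuleCat.{u} R), IsSyzygy R j K N → ∀ m, 1 ≤ m →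
      extZero R (m + j) N Y → extZero R m K Y := by
  intro j
  induction j with
  | zero =>
    intro K N hKN m _ h
    obtain ⟨e⟩ := hKN
    exact extZero_of_iso e.symm m (by simpa using h)
  | succ j ih =>
    intro K N hKN m hm h
    obtain ⟨P, K'', i, p, hP, hPfin, hi, hp, hex, hK''⟩ := hKN
    haveI := hP
    cases m with
    | zero => omega
    | succ n =>
      have h' : extZero R (n + 2 + j) N Y := by
        rw [show n + 2 + j = n + 1 + (j + 1) by omega]
        exact h
      have h2 := ih K'' N hK'' (n + 2) (by omega) h'
      exact (extZero_shift i p hi hp hex Y n).1 h2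

lemma chain_equiv [IsNoetherianRing R] (X : ModuleCat.{u} R) (c : ℕ)
    (hgrade : ∀ i ≤ c, extZero R i X (ModuleCat.of R R)) :
    ∀ j, j ≤ c → ∀ W : ModuleCat.{u} R, IsSyzygy R j W X →
      Nonempty ((stableEndIdeal R W).ringCon.Quotient ≃+* (stableEndIdeal R X).ringCon.Quotient) := by
  intro j
  induction j with
  | zero =>
    intro _ W hW
    obtain ⟨e⟩ := hW
    exact quot_congr e.toLinearEquiv
  | succ j ih =>
    intro hj W hW
    obtain ⟨P, K, i, p, hP, hPfin, hi, hp, hex, hK⟩ := hW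
    haveI := hP
    haveI := hPfin
    haveI hWfin : Module.Finite R ↑W := by
      haveI : IsNoetherian R ↑P := isNoetherian_of_isNoetherianRing_of_finite R ↑P
      haveI : IsNoetherian R ↑W := isNoetherian_of_injective i.hom hi
      exact ⟨IsNoetherian.noetherian ⊤⟩
    have hext1 : extZero R 1 K (ModuleCat.of R R) :=
      extZero_of_syzygy (ModuleCat.of R R) j K X hK 1 le_rfl (hgrade (1 + j) (by omega))
    have hext : ∀ f : ↑W →ₗ[R] R, ∃ g : ↑P →ₗ[R] R, g ∘ₗ i.hom = f := by
      intro f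
      obtain ⟨g, hg⟩ := ext1_surj i p hi hp hex hext1 (ModuleCat.ofHom f)
      exact ⟨g.hom, congrArg ModuleCat.Hom.hom hg⟩
    have hPmod : Module.Projective R ↑P := by
      rw [IsProjective.iff_projective]
      exact hP
    obtain ⟨e1⟩ := step_equiv (R := R) i.hom p.hom hi hp hex hPmod hext
    obtain ⟨e2⟩ := ih (by omega) K hK
    exact ⟨e1.trans e2⟩
end Glue

/-- For `0 ≤ c < grade X`, the stable endomorphism ring of `Ω^c X` is isomorphic to
`End_R(X)`. -/
theorem stmt19 (R : Type u) [CommRing R] [IsNoetherianRing R]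
    (X : ModuleCat.{u} R) [Module.Finite R X]
    (c : ℕ) (hgrade : ∀ i ≤ c, extZero R i X (ModuleCat.of R R))
    (W : ModuleCat.{u} R) (hW : IsSyzygy R c W X) :
    Nonempty ((stableEndIdeal R W).ringCon.Quotient ≃+* Module.End R X) := by
  have h0 : ∀ f : ↑X →ₗ[R] R, f = 0 := by
    intro f
    exact congrArg ModuleCat.Hom.hom (hom_eq_zero_of_extZero_zero (hgrade 0 (Nat.zero_le c)) (ModuleCat.ofHom f))
  obtain ⟨e1⟩ := chain_equiv X c hgrade c le_rfl W hW
  obtain ⟨e2⟩ := quot_bot h0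
  exact ⟨e1.trans e2⟩
end
end
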